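/- Let M be an e-persistent Mealy machine, L a language over I that is sound and complete for M, R the minimal DFA for L, P a minimal accepting state cover of R, and W a separating family for R. Consider the test suite T_L = { p·i·w | p ∈ P, i ∈ I^{≤1}, w ∈ W_{δ^R(p·i)} }. After executing all words of T_L (truncated to their longest prefixes in L, with one additional error step allowed), the tree states reached by the words of P are pairwise distinguishable: for every distinct p, q ∈ P, the states δ^M(q0,p) and δ^M(q0,q) of M are inequivalent. -/
import Mathlib


structure Mealy (I O : Type) where
  Q : Type
  q0 : Q
  trans : Q → I → Q
  out1 : Q → I → O

namespace Mealy

variable {I O : Type}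

def run (M : Mealy I O) : M.Q → List I → M.Q
  | q, [] => q
  | q, i :: σ => M.run (M.trans q i) σ

def out (M : Mealy I O) : M.Q → List I → List O
  | _, [] => []
  | q, i :: σ => M.out1 q i :: M.out (M.trans q i) σ

/-- `M` is `e`-persistent: once the output word ends in `e`, appending any
input keeps the last output equal to `e`. -/
def EPersistent (M : Mealy I O) (e : O) : Prop :=
  ∀ (σ : List I) (i : I),
    (M.out M.q0 σ).getLast? = some e →
    (M.out M.q0 (σ ++ [i])).getLast? = some e

end Mealy


private lemma run_append {I O : Type} (M : Mealy I O) (q : M.Q) (a b : List I) :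
    M.run q (a ++ b) = M.run (M.run q a) b := by
  induction a generalizing q with
  | nil => rfl
  | cons i t ih => simp [Mealy.run, ih]

private lemma out_append {I O : Type} (M : Mealy I O) (q : M.Q) (a b : List I) :
    M.out q (a ++ b) = M.out q a ++ M.out (M.run q a) b := by
  induction a generalizing q with
  | nil => rfl
  | cons i t ih => simp [Mealy.out, Mealy.run, ih]

private lemma out_ne_nil {I O : Type} (M : Mealy I O) (q : M.Q) (a : List I)
    (h : a ≠ []) : M.out q a ≠ [] := by
  cases a with
  | nil => exact absurd rfl h
  | cons i t => simp [Mealy.out]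

/-- Let `M` be `e`-persistent, `L` sound and complete for `M`, `R` the
minimal DFA for `L`, `P` a minimal accepting state cover of `R`, and `W` a
separating family for `R`.  Then (after executing the test suite
`T_L = { p·i·w | p ∈ P, i ∈ I^{≤1}, w ∈ W_{δ(p·i)} }`) the states of `M`
reached by distinct words of `P` are pairwise inequivalent. -/
theorem stmt10 {I O Qr : Type} (M : Mealy I O) (e : O) (R : DFA I Qr)
    (L : Set (List I))
    (hL : ∀ σ : List I, σ ∈ L ↔ R.eval σ ∈ R.accept)
    (hpers : M.EPersistent e)
    (hsound : ∀ σ ∉ L, (M.out M.q0 σ).getLast? = some e)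
    (hcomplete : ∀ σ : List I, (M.out M.q0 σ).getLast? = some e → σ ∉ L)
    -- minimality of `R`: distinct states are separated by some word
    (hRmin : ∀ p q : Qr, p ≠ q →
      ∃ w : List I, (R.evalFrom p w ∈ R.accept ↔ R.evalFrom q w ∉ R.accept))
    (P : Set (List I))
    -- `P` is an accepting state cover reaching pairwise distinct states
    (hPacc : ∀ p ∈ P, R.eval p ∈ R.accept)
    (hPdist : ∀ p ∈ P, ∀ q ∈ P, p ≠ q → R.eval p ≠ R.eval q)
    (W : Qr → Set (List I))
    -- `W` is a separating family for `R`
    (hW : ∀ p q : Qr, p ≠ q →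
      ∃ w ∈ W p ∩ W q, (R.evalFrom p w ∈ R.accept ↔ R.evalFrom q w ∉ R.accept)) :
    ∀ p ∈ P, ∀ q ∈ P, p ≠ q →
      ∃ σ : List I, M.out (M.run M.q0 p) σ ≠ M.out (M.run M.q0 q) σ := by
  intro p hp q hq hpq
  have hne : R.eval p ≠ R.eval q := hPdist p hp q hq hpq
  obtain ⟨w, -, hw⟩ := hW _ _ hne
  have hwne : w ≠ [] := by
    rintro rfl
    simp only [DFA.evalFrom, List.foldl_nil] at hw
    exact (hw.mp (hPacc p hp)) (hPacc q hq)
  have keyp : R.eval (p ++ w) = R.evalFrom (R.eval p) w :=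
    R.evalFrom_of_append R.start p w
  have keyq : R.eval (q ++ w) = R.evalFrom (R.eval q) w :=
    R.evalFrom_of_append R.start q w
  -- exactly one of p++w, q++w is in L
  have hLiff : (p ++ w ∈ L) ↔ (q ++ w ∉ L) := by
    rw [hL, hL, keyp, keyq]; exact hw
  refine ⟨w, fun hcontra => ?_⟩
  -- last outputs
  have hlast : ∀ σ : List I, (M.out M.q0 (σ ++ w)).getLast?
      = (M.out (M.run M.q0 σ) w).getLast? := by
    intro σ
    rw [out_append, List.getLast?_append]
    cases h : (M.out (M.run M.q0 σ) w).getLast? with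
    | none => exact absurd (List.getLast?_eq_none_iff.mp h) (out_ne_nil M _ w hwne)
    | some o => rfl
  have hEiff : ∀ σ : List I, σ ∉ L ↔ (M.out M.q0 σ).getLast? = some e := by
    intro σ
    exact ⟨hsound σ, fun h => hcomplete σ h⟩
  have h1 := hlast p
  have h2 := hlast q
  rw [hcontra] at h1
  have : (p ++ w ∉ L) ↔ (q ++ w ∉ L) := by
    rw [hEiff, hEiff, h1, h2]
  rw [not_iff_not] at this
  rw [this] at hLiff
  exact (iff_not_self hLiff).elim
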